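/- Let ⋆ be a semistar operation on an integral domain D such that D^⋆ = D^{⋆̃}, where ⋆̃ is the stable finite-type semistar operation associated to ⋆. Then a nonzero D-submodule I of K is quasi-⋆_f-invertible if and only if I is quasi-⋆̃-invertible. -/

import Mathlib

open Submodule

set_option linter.unusedSectionVars false
set_option linter.unnecessarySimpa false
set_option maxHeartbeats 1000000

structure SemistarOperation (R K : Type*) [CommRing R] [Field K] [Algebra R K] where
  star : Submodule R K → Submodule R K
  star_smul : ∀ (x : K), x ≠ 0 → ∀ E : Submodule R K, E ≠ ⊥ →
    star (E.map (LinearMap.mul R K x)) = (star E).map (LinearMap.mul R K x)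
  star_mono : ∀ E F : Submodule R K, E ≠ ⊥ → F ≠ ⊥ → E ≤ F → star E ≤ star F
  le_star : ∀ E : Submodule R K, E ≠ ⊥ → E ≤ star E
  star_idem : ∀ E : Submodule R K, E ≠ ⊥ → star (star E) = star E

variable {R K : Type*} [CommRing R] [Field K] [Algebra R K]

def starF (s : SemistarOperation R K) (E : Submodule R K) : Submodule R K :=
  ⨆ (F : Submodule R K) (_ : F ≤ E ∧ F ≠ ⊥ ∧ F.FG), s.star F

def IsFiniteTypeOp (s : SemistarOperation R K) : Prop :=
  ∀ E : Submodule R K, E ≠ ⊥ → s.star E = starF s E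

def IsStableOp (s : SemistarOperation R K) : Prop :=
  ∀ E F : Submodule R K, E ≠ ⊥ → F ≠ ⊥ → E ⊓ F ≠ ⊥ → s.star (E ⊓ F) = s.star E ⊓ s.star F

def IsFracIdeal (I : Submodule R K) : Prop :=
  I ≠ ⊥ ∧ ∃ d : R, d ≠ 0 ∧ ∀ x ∈ I, algebraMap R K d * x ∈ (1 : Submodule R K)

def IsStarInv (s : SemistarOperation R K) (I : Submodule R K) : Prop :=
  s.star (I * ((1 : Submodule R K) / I)) = s.star 1

def IsQuasiStarInv (s : SemistarOperation R K) (I : Submodule R K) : Prop :=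
  s.star (I * (s.star 1 / I)) = s.star 1

def QuasiStarIdeal (f : Submodule R K → Submodule R K) (I : Ideal R) : Prop :=
  I ≠ ⊥ ∧ (f (Submodule.map (Algebra.linearMap R K) I)).comap (Algebra.linearMap R K) = I

def QuasiStarMax (f : Submodule R K → Submodule R K) (I : Ideal R) : Prop :=
  QuasiStarIdeal f I ∧ I ≠ ⊤ ∧ ∀ J : Ideal R, QuasiStarIdeal f J → J ≠ ⊤ → I ≤ J → I = J

def HStarDomain (s : SemistarOperation R K) : Prop :=
  ∀ I : Ideal R, I ≠ ⊥ → s.star (Submodule.map (Algebra.linearMap R K) I) = s.star 1 →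
    ∃ J : Ideal R, J ≠ ⊥ ∧ J.FG ∧ J ≤ I ∧ s.star (Submodule.map (Algebra.linearMap R K) J) = s.star 1

def locAt (Q : Ideal R) : Submodule R K :=
  span R {x : K | ∃ s : R, s ∉ Q ∧ x * algebraMap R K s = 1}

def starTilde (s : SemistarOperation R K) (E : Submodule R K) : Submodule R K :=
  ⨅ (Q : Ideal R) (_ : QuasiStarMax (starF s) Q), E * locAt Q

variable {D K : Type*} [CommRing D] [IsDomain D] [Field K] [Algebra D K] [IsFractionRing D K]


-- ===== auxiliary lemmas =====

section Aux

variable (s : SemistarOperation D K)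

lemma ss_one_ne_bot : (1 : Submodule D K) ≠ ⊥ := by
  intro hb
  have h1 : (1 : K) ∈ (1 : Submodule D K) := Submodule.one_le.mp le_rfl
  rw [hb] at h1
  exact one_ne_zero (Submodule.mem_bot D |>.mp h1)

lemma ss_mul_ne_bot {E F : Submodule D K} (hE : E ≠ ⊥) (hF : F ≠ ⊥) : E * F ≠ ⊥ := by
  obtain ⟨x, hxE, hx0⟩ := (Submodule.ne_bot_iff E).mp hE
  obtain ⟨y, hyF, hy0⟩ := (Submodule.ne_bot_iff F).mp hF
  exact (Submodule.ne_bot_iff _).mpr ⟨x * y, Submodule.mul_mem_mul hxE hyF, mul_ne_zero hx0 hy0⟩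

lemma ss_star_ne_bot {E : Submodule D K} (hE : E ≠ ⊥) : s.star E ≠ ⊥ :=
  fun hb => hE (le_bot_iff.mp (hb ▸ s.le_star E hE))

lemma ss_mul_star_le (E : Submodule D K) {F : Submodule D K} (hF : F ≠ ⊥) :
    E * s.star F ≤ s.star (E * F) := by
  rw [Submodule.mul_le]
  intro m hm n hn
  by_cases hm0 : m = 0
  · simpa [hm0] using (s.star (E * F)).zero_mem
  have hmem : m * n ∈ (s.star F).map (LinearMap.mul D K m) := ⟨n, hn, rfl⟩
  rw [← s.star_smul m hm0 F hF] at hmem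
  have hle : (F.map (LinearMap.mul D K m)) ≤ E * F := by
    rintro _ ⟨f, hf, rfl⟩
    exact Submodule.mul_mem_mul hm hf
  have hnb : F.map (LinearMap.mul D K m) ≠ ⊥ := by
    obtain ⟨f, hf, hf0⟩ := (Submodule.ne_bot_iff F).mp hF
    exact (Submodule.ne_bot_iff _).mpr ⟨m * f, ⟨f, hf, rfl⟩, mul_ne_zero hm0 hf0⟩
  have hEb : E ≠ ⊥ := (Submodule.ne_bot_iff E).mpr ⟨m, hm, hm0⟩
  exact s.star_mono _ _ hnb (ss_mul_ne_bot hEb hF) hle hmem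

lemma ss_one_mem_star_mul {E F : Submodule D K} (hE : E ≠ ⊥) (hF : F ≠ ⊥)
    (h1 : (1 : K) ∈ s.star E) (h2 : (1 : K) ∈ s.star F) : (1 : K) ∈ s.star (E * F) := by
  have hstep1 : s.star E * s.star F ≤ s.star (s.star E * F) := ss_mul_star_le s (s.star E) hF
  have hstep2 : s.star E * F ≤ s.star (E * F) := by
    have := ss_mul_star_le s F hE
    rwa [mul_comm F (s.star E), mul_comm F E] at this
  have hstep3 : s.star (s.star E * F) ≤ s.star (E * F) := by
    have hmono := s.star_mono (s.star E * F) (s.star (E * F))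
      (ss_mul_ne_bot (ss_star_ne_bot s hE) hF)
      (ss_star_ne_bot s (ss_mul_ne_bot hE hF)) hstep2
    rw [s.star_idem (E * F) (ss_mul_ne_bot hE hF)] at hmono
    exact hmono
  have : (1 : K) * 1 ∈ s.star E * s.star F := Submodule.mul_mem_mul h1 h2
  rw [one_mul] at this
  exact hstep3 (hstep1 this)

lemma ss_star_le_starF {E F : Submodule D K} (h : F ≤ E) (hb : F ≠ ⊥) (hfg : F.FG) :
    s.star F ≤ starF s E :=
  le_iSup₂_of_le F ⟨h, hb, hfg⟩ le_rfl

lemma ss_le_starF (E : Submodule D K) : E ≤ starF s E := by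
  intro x hx
  by_cases hx0 : x = 0
  · simpa [hx0] using (starF s E).zero_mem
  have hsp : (Submodule.span D {x} : Submodule D K) ≤ E := by
    rw [Submodule.span_le]; simpa using hx
  have hnb : (Submodule.span D {x} : Submodule D K) ≠ ⊥ := by
    refine (Submodule.ne_bot_iff _).mpr ⟨x, Submodule.subset_span rfl, hx0⟩
  exact ss_star_le_starF s hsp hnb (Submodule.fg_span_singleton x)
    (s.le_star _ hnb (Submodule.subset_span rfl))

lemma ss_starF_le_star {E : Submodule D K} (hE : E ≠ ⊥) : starF s E ≤ s.star E :=
  iSup₂_le fun _ hF => s.star_mono _ _ hF.2.1 hE hF.1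

lemma ss_starF_mono {E₁ E₂ : Submodule D K} (h : E₁ ≤ E₂) : starF s E₁ ≤ starF s E₂ :=
  iSup₂_le fun _ hF => ss_star_le_starF s (hF.1.trans h) hF.2.1 hF.2.2

lemma ss_fg_one : (1 : Submodule D K).FG := by
  rw [Submodule.one_eq_span]; exact Submodule.fg_span_singleton 1

lemma ss_starF_one : starF s (1 : Submodule D K) = s.star 1 :=
  le_antisymm (ss_starF_le_star s (ss_one_ne_bot))
    (ss_star_le_starF s le_rfl (ss_one_ne_bot) (ss_fg_one))

lemma ss_starF_bot : starF s (⊥ : Submodule D K) = ⊥ :=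
  le_bot_iff.mp (iSup₂_le fun _ hF => absurd (le_bot_iff.mp hF.1) hF.2.1)

lemma ss_starF_eq (E : Submodule D K) :
    starF s E = ⨆ i : {F : Submodule D K // F ≤ E ∧ F ≠ ⊥ ∧ F.FG}, s.star i.1 :=
  iSup_subtype' (f := fun (F : Submodule D K) (_ : F ≤ E ∧ F ≠ ⊥ ∧ F.FG) => s.star F)

lemma ss_dir (E : Submodule D K) :
    Directed (· ≤ ·) (fun i : {F : Submodule D K // F ≤ E ∧ F ≠ ⊥ ∧ F.FG} => s.star i.1) := by
  intro i j
  have hnb : i.1 ⊔ j.1 ≠ ⊥ := by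
    intro hb
    have h2 : i.1 ≤ i.1 ⊔ j.1 := le_sup_left
    rw [hb] at h2
    exact i.2.2.1 (le_bot_iff.mp h2)
  refine ⟨⟨i.1 ⊔ j.1, sup_le i.2.1 j.2.1, hnb, i.2.2.2.sup j.2.2.2⟩, ?_, ?_⟩
  · exact s.star_mono _ _ i.2.2.1 hnb le_sup_left
  · exact s.star_mono _ _ j.2.2.1 hnb le_sup_right

lemma ss_nonempty_idx {E : Submodule D K} (hE : E ≠ ⊥) :
    Nonempty {F : Submodule D K // F ≤ E ∧ F ≠ ⊥ ∧ F.FG} := by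
  obtain ⟨x, hx, hx0⟩ := (Submodule.ne_bot_iff E).mp hE
  refine ⟨⟨Submodule.span D {x}, ?_, ?_, Submodule.fg_span_singleton x⟩⟩
  · rw [Submodule.span_le]; simpa using hx
  · exact (Submodule.ne_bot_iff _).mpr ⟨x, Submodule.subset_span rfl, hx0⟩

lemma ss_mem_starF {E : Submodule D K} (hE : E ≠ ⊥) {x : K} (hx : x ∈ starF s E) :
    ∃ F : Submodule D K, F ≤ E ∧ F ≠ ⊥ ∧ F.FG ∧ x ∈ s.star F := by
  haveI hne := ss_nonempty_idx hE
  rw [ss_starF_eq] at hx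
  obtain ⟨i, hi⟩ := (Submodule.mem_iSup_of_directed _ (ss_dir s E)).mp hx
  exact ⟨i.1, i.2.1, i.2.2.1, i.2.2.2, hi⟩

lemma ss_starF_starF_le {E : Submodule D K} (hE : E ≠ ⊥) :
    starF s (starF s E) ≤ starF s E := by
  refine iSup₂_le fun G hG => ?_
  haveI hne := ss_nonempty_idx hE
  have hc := (Submodule.fg_iff_compact G).mp hG.2.2
  have hle : G ≤ sSup (Set.range fun i : {F : Submodule D K // F ≤ E ∧ F ≠ ⊥ ∧ F.FG} =>
      s.star i.1) := by
    rw [sSup_range, ← ss_starF_eq]; exact hG.1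
  obtain ⟨_, ⟨i, rfl⟩, hGi⟩ :=
    (CompleteLattice.isCompactElement_iff_le_of_directed_sSup_le (Submodule D K) G).mp hc _
      (Set.range_nonempty _) ((ss_dir s E).directedOn_range) hle
  have h1 : s.star G ≤ s.star (s.star i.1) :=
    s.star_mono _ _ hG.2.1 (ss_star_ne_bot s i.2.2.1) hGi
  rw [s.star_idem i.1 i.2.2.1] at h1
  exact h1.trans (ss_star_le_starF s i.2.1 i.2.2.1 i.2.2.2)

lemma ss_one_mem_starF_mul {E F : Submodule D K} (hE : E ≠ ⊥) (hF : F ≠ ⊥)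
    (h1 : (1 : K) ∈ starF s E) (h2 : (1 : K) ∈ starF s F) : (1 : K) ∈ starF s (E * F) := by
  obtain ⟨E', hE'le, hE'b, hE'fg, hE'1⟩ := ss_mem_starF s hE h1
  obtain ⟨F', hF'le, hF'b, hF'fg, hF'1⟩ := ss_mem_starF s hF h2
  have h3 : (1 : K) ∈ s.star (E' * F') := ss_one_mem_star_mul s hE'b hF'b hE'1 hF'1
  exact ss_star_le_starF s (mul_le_mul' hE'le hF'le) (ss_mul_ne_bot hE'b hF'b)
    (hE'fg.mul hF'fg) h3

lemma ss_algebraMap_injective : Function.Injective (algebraMap D K) :=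
  IsFractionRing.injective D K

lemma ss_map_ne_bot {A : Ideal D} (hA : A ≠ ⊥) :
    Submodule.map (Algebra.linearMap D K) A ≠ ⊥ := by
  obtain ⟨a, ha, ha0⟩ := (Submodule.ne_bot_iff A).mp hA
  refine (Submodule.ne_bot_iff _).mpr ⟨algebraMap D K a, Submodule.mem_map_of_mem ha, ?_⟩
  intro h0
  exact ha0 (ss_algebraMap_injective (by rw [h0, map_zero]))

lemma ss_le_comap_starF_map (A : Ideal D) :
    A ≤ (starF s (Submodule.map (Algebra.linearMap D K) A)).comap (Algebra.linearMap D K) := by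
  intro a ha
  exact Submodule.mem_comap.mpr (ss_le_starF s _ (Submodule.mem_map_of_mem ha))

lemma ss_closure_quasi {A : Ideal D} (hA : A ≠ ⊥) :
    QuasiStarIdeal (starF s)
      ((starF s (Submodule.map (Algebra.linearMap D K) A)).comap (Algebra.linearMap D K)) := by
  set A' := (starF s (Submodule.map (Algebra.linearMap D K) A)).comap (Algebra.linearMap D K)
    with hA'
  constructor
  · intro hb
    exact hA (le_bot_iff.mp (hb ▸ ss_le_comap_starF_map s A))
  · refine le_antisymm ?_ (ss_le_comap_starF_map s A')
    have h1 : Submodule.map (Algebra.linearMap D K) A' ≤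
        starF s (Submodule.map (Algebra.linearMap D K) A) :=
      Submodule.map_comap_le (Algebra.linearMap D K) _
    have h2 : starF s (Submodule.map (Algebra.linearMap D K) A') ≤
        starF s (Submodule.map (Algebra.linearMap D K) A) :=
      (ss_starF_mono s h1).trans (ss_starF_starF_le s (ss_map_ne_bot hA))
    exact Submodule.comap_mono h2

lemma ss_exists_quasiMax {A : Ideal D} (hq : QuasiStarIdeal (starF s) A) (ht : A ≠ ⊤) :
    ∃ M : Ideal D, QuasiStarMax (starF s) M ∧ A ≤ M := by
  set S : Set (Ideal D) := {J | QuasiStarIdeal (starF s) J ∧ J ≠ ⊤ ∧ A ≤ J} with hS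
  have hzorn := zorn_le_nonempty₀ S ?_ A ⟨hq, ht, le_rfl⟩
  · obtain ⟨m, hAm, hmS, hmax⟩ := hzorn
    refine ⟨m, ⟨hmS.1, hmS.2.1, ?_⟩, hAm⟩
    intro J hJq hJt hmJ
    exact le_antisymm hmJ (hmax ⟨hJq, hJt, hAm.trans hmJ⟩ hmJ)
  · intro c hcS hchain y hy
    have hdir : DirectedOn (· ≤ ·) c := hchain.directedOn
    refine ⟨sSup c, ⟨⟨?_, ?_⟩, ?_, ?_⟩, fun z hz => le_sSup hz⟩
    · intro hb
      exact (hcS hy).1.1 (le_bot_iff.mp (hb ▸ le_sSup hy))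
    · refine le_antisymm ?_ (ss_le_comap_starF_map s _)
      intro x hx
      have hx' := Submodule.mem_comap.mp hx
      have hrw : Submodule.map (Algebra.linearMap D K) (sSup c) =
          ⨆ i : c, Submodule.map (Algebra.linearMap D K) (i : Ideal D) := by
        rw [sSup_eq_iSup']; exact Submodule.map_iSup _ _
      rw [hrw] at hx'
      have hnb : (⨆ i : c, Submodule.map (Algebra.linearMap D K) (i : Ideal D)) ≠ ⊥ := by
        intro hb
        have : Submodule.map (Algebra.linearMap D K) (y : Ideal D) ≤ ⊥ :=
          hb ▸ le_iSup (fun i : c => Submodule.map (Algebra.linearMap D K) (i : Ideal D)) ⟨y, hy⟩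
        exact ss_map_ne_bot (hcS hy).1.1 (le_bot_iff.mp this)
      obtain ⟨F, hFle, hFb, hFfg, hF⟩ := ss_mem_starF s hnb hx'
      have hdir2 : Directed (· ≤ ·)
          (fun i : c => Submodule.map (Algebra.linearMap D K) (i : Ideal D)) := by
        intro i j
        obtain ⟨z, hzc, h1, h2⟩ := hdir i.1 i.2 j.1 j.2
        exact ⟨⟨z, hzc⟩, Submodule.map_mono h1, Submodule.map_mono h2⟩
      haveI : Nonempty c := ⟨⟨y, hy⟩⟩
      have hcomp := (Submodule.fg_iff_compact F).mp hFfg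
      have hle2 : F ≤ sSup (Set.range
          (fun i : c => Submodule.map (Algebra.linearMap D K) (i : Ideal D))) := by
        rw [sSup_range]; exact hFle
      obtain ⟨_, ⟨i, rfl⟩, hFi⟩ :=
        (CompleteLattice.isCompactElement_iff_le_of_directed_sSup_le (Submodule D K) F).mp hcomp _
          (Set.range_nonempty _) hdir2.directedOn_range hle2
      have h5 := ss_star_le_starF s hFi hFb hFfg hF
      have hxi : x ∈ (i : Ideal D) := by
        have h6 : x ∈ (starF s (Submodule.map (Algebra.linearMap D K)
            (i : Ideal D))).comap (Algebra.linearMap D K) := Submodule.mem_comap.mpr h5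
        rwa [(hcS i.2).1.2] at h6
      exact le_sSup i.2 hxi
    · intro htop
      have h1 : (1 : D) ∈ sSup c := htop ▸ Submodule.mem_top
      obtain ⟨J, hJc, hJ1⟩ := (Submodule.mem_sSup_of_directed ⟨y, hy⟩ hdir).mp h1
      exact (hcS hJc).2.1 ((Ideal.eq_top_iff_one J).mpr hJ1)
    · exact (hcS hy).2.2.trans (le_sSup hy)

lemma ss_not_le_of_one_mem {A M : Ideal D} (hM : QuasiStarMax (starF s) M)
    (h1 : (1 : K) ∈ starF s (Submodule.map (Algebra.linearMap D K) A)) : ¬ A ≤ M := by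
  intro hle
  have h2 : (1 : K) ∈ starF s (Submodule.map (Algebra.linearMap D K) M) :=
    ss_starF_mono s (Submodule.map_mono hle) h1
  have h3 : (1 : D) ∈ (starF s (Submodule.map (Algebra.linearMap D K) M)).comap
      (Algebra.linearMap D K) := by
    refine Submodule.mem_comap.mpr ?_
    simpa [Algebra.linearMap_apply, map_one] using h2
  rw [hM.1.2] at h3
  exact hM.2.1 ((Ideal.eq_top_iff_one M).mpr h3)

lemma ss_one_mem_of_not_le {A : Ideal D} (hA : A ≠ ⊥)
    (hno : ∀ M : Ideal D, QuasiStarMax (starF s) M → ¬ A ≤ M) :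
    (1 : K) ∈ starF s (Submodule.map (Algebra.linearMap D K) A) := by
  by_contra h1
  set A' := (starF s (Submodule.map (Algebra.linearMap D K) A)).comap (Algebra.linearMap D K)
    with hA'
  have hA'q : QuasiStarIdeal (starF s) A' := ss_closure_quasi s hA
  have hA't : A' ≠ ⊤ := by
    intro htop
    have : (1 : D) ∈ A' := htop ▸ Submodule.mem_top
    apply h1
    simpa [A', Algebra.linearMap_apply, map_one] using Submodule.mem_comap.mp this
  obtain ⟨M, hMmax, hA'M⟩ := ss_exists_quasiMax s hA'q hA't
  exact hno M hMmax ((ss_le_comap_starF_map s A).trans hA'M)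

lemma ss_ofId_toLinearMap : (Algebra.ofId D K).toLinearMap = Algebra.linearMap D K := rfl

lemma ss_map_mul (X Y : Ideal D) :
    Submodule.map (Algebra.linearMap D K) (X * Y) =
      Submodule.map (Algebra.linearMap D K) X * Submodule.map (Algebra.linearMap D K) Y := by
  rw [← ss_ofId_toLinearMap]
  exact Submodule.map_mul X Y (Algebra.ofId D K)

lemma ss_quasiMax_prime {M : Ideal D} (hM : QuasiStarMax (starF s) M) : M.IsPrime := by
  refine ⟨hM.2.1, ?_⟩
  intro a b hab
  by_contra hcon
  push_neg at hcon
  obtain ⟨ha, hb⟩ := hcon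
  have key : ∀ x : D, x ∉ M →
      (1 : K) ∈ starF s (Submodule.map (Algebra.linearMap D K) (M ⊔ Ideal.span {x})) := by
    intro x hx
    set B := M ⊔ Ideal.span {x} with hB
    have hBb : B ≠ ⊥ := fun hbb => hM.1.1 (le_bot_iff.mp (hbb ▸ (le_sup_left : M ≤ B)))
    set B' := (starF s (Submodule.map (Algebra.linearMap D K) B)).comap (Algebra.linearMap D K)
      with hB'
    have hB'q : QuasiStarIdeal (starF s) B' := ss_closure_quasi s hBb
    have hBB' : B ≤ B' := ss_le_comap_starF_map s B
    have hB't : B' = ⊤ := by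
      by_contra hB't
      have hMB' : M ≤ B' := (le_sup_left : M ≤ B).trans hBB'
      have := hM.2.2 B' hB'q hB't hMB'
      apply hx
      rw [this]
      exact hBB' (le_sup_right (a := M) (Ideal.subset_span rfl))
    have : (1 : D) ∈ B' := hB't ▸ Submodule.mem_top
    simpa [B', Algebra.linearMap_apply, map_one] using Submodule.mem_comap.mp this
  have h1a := key a ha
  have h1b := key b hb
  have hnb1 : Submodule.map (Algebra.linearMap D K) (M ⊔ Ideal.span {a}) ≠ ⊥ :=
    ss_map_ne_bot (fun hbb => hM.1.1 (le_bot_iff.mp (hbb ▸ (le_sup_left : M ≤ _))))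
  have hnb2 : Submodule.map (Algebra.linearMap D K) (M ⊔ Ideal.span {b}) ≠ ⊥ :=
    ss_map_ne_bot (fun hbb => hM.1.1 (le_bot_iff.mp (hbb ▸ (le_sup_left : M ≤ _))))
  have hprod : (1 : K) ∈ starF s (Submodule.map (Algebra.linearMap D K) (M ⊔ Ideal.span {a}) *
      Submodule.map (Algebra.linearMap D K) (M ⊔ Ideal.span {b})) :=
    ss_one_mem_starF_mul s hnb1 hnb2 h1a h1b
  have hideal : (M ⊔ Ideal.span {a}) * (M ⊔ Ideal.span {b}) ≤ M := by
    rw [Ideal.sup_mul, Ideal.mul_sup, Ideal.mul_sup]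
    refine sup_le (sup_le Ideal.mul_le_left Ideal.mul_le_left) (sup_le Ideal.mul_le_right ?_)
    rw [Ideal.span_singleton_mul_span_singleton]
    rw [Ideal.span_le]
    simpa using hab
  have hle : Submodule.map (Algebra.linearMap D K) (M ⊔ Ideal.span {a}) *
      Submodule.map (Algebra.linearMap D K) (M ⊔ Ideal.span {b}) ≤
      Submodule.map (Algebra.linearMap D K) M := by
    rw [← ss_map_mul]
    exact Submodule.map_mono hideal
  have h1M : (1 : K) ∈ starF s (Submodule.map (Algebra.linearMap D K) M) :=
    ss_starF_mono s hle hprod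
  have h3 : (1 : D) ∈ (starF s (Submodule.map (Algebra.linearMap D K) M)).comap
      (Algebra.linearMap D K) := by
    refine Submodule.mem_comap.mpr ?_
    simpa [Algebra.linearMap_apply, map_one] using h1M
  rw [hM.1.2] at h3
  exact hM.2.1 ((Ideal.eq_top_iff_one M).mpr h3)

end Aux

section Aux2

variable (s : SemistarOperation D K)

lemma ss_one_mem_locAt {M : Ideal D} (hM : M ≠ ⊤) : (1 : K) ∈ (locAt M : Submodule D K) := by
  refine Submodule.subset_span ⟨1, ?_, by rw [map_one, mul_one]⟩
  exact fun h1 => hM ((Ideal.eq_top_iff_one M).mpr h1)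

lemma ss_locAt_mul_self {M : Ideal D} (hp : M.IsPrime) :
    (locAt M : Submodule D K) * locAt M ≤ locAt M := by
  unfold locAt
  rw [Submodule.span_mul_span, Submodule.span_le]
  rintro _ ⟨x, ⟨sx, hsx, hx⟩, y, ⟨sy, hsy, hy⟩, rfl⟩
  refine Submodule.subset_span ⟨sx * sy, ?_, ?_⟩
  · intro hmem
    exact ((hp.mem_or_mem hmem).elim hsx hsy)
  · rw [map_mul]
    calc x * y * (algebraMap D K sx * algebraMap D K sy)
        = (x * algebraMap D K sx) * (y * algebraMap D K sy) := by ring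
      _ = 1 := by rw [hx, hy, mul_one]

lemma ss_exists_denom {M : Ideal D} (hp : M.IsPrime) {y : K}
    (hy : y ∈ (locAt M : Submodule D K)) :
    ∃ S : D, S ∉ M ∧ y * algebraMap D K S ∈ (1 : Submodule D K) := by
  refine Submodule.span_induction (p := fun y _ =>
      ∃ S : D, S ∉ M ∧ y * algebraMap D K S ∈ (1 : Submodule D K)) ?_ ?_ ?_ ?_ hy
  · intro x hx
    obtain ⟨t, ht, hxt⟩ := hx
    exact ⟨t, ht, by rw [hxt]; exact Submodule.one_le.mp le_rfl⟩
  · exact ⟨1, fun h1 => hp.ne_top ((Ideal.eq_top_iff_one M).mpr h1),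
      by rw [zero_mul]; exact Submodule.zero_mem _⟩
  · intro x z _ _ ihx ihz
    obtain ⟨Sx, hSx, hx1⟩ := ihx
    obtain ⟨Sz, hSz, hz1⟩ := ihz
    obtain ⟨a, ha⟩ := Submodule.mem_one.mp hx1
    obtain ⟨b, hb⟩ := Submodule.mem_one.mp hz1
    refine ⟨Sx * Sz, fun hmem => (hp.mem_or_mem hmem).elim hSx hSz, ?_⟩
    refine Submodule.mem_one.mpr ⟨a * Sz + b * Sx, ?_⟩
    rw [map_add, map_mul, map_mul, map_mul, ha, hb]
    ring
  · intro a x _ ihx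
    obtain ⟨Sx, hSx, hx1⟩ := ihx
    refine ⟨Sx, hSx, ?_⟩
    rw [smul_mul_assoc]
    exact Submodule.smul_mem _ a hx1

lemma ss_of_mem_mul_locAt {M : Ideal D} (hp : M.IsPrime) {E : Submodule D K} {z : K}
    (hz : z ∈ E * (locAt M : Submodule D K)) :
    ∃ S : D, S ∉ M ∧ z * algebraMap D K S ∈ E := by
  refine Submodule.mul_induction_on hz ?_ ?_
  · intro m hm n hn
    obtain ⟨S, hS, h1⟩ := ss_exists_denom hp hn
    obtain ⟨a, ha⟩ := Submodule.mem_one.mp h1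
    refine ⟨S, hS, ?_⟩
    have : m * n * algebraMap D K S = a • m := by
      rw [Algebra.smul_def, ha]; ring
    rw [this]
    exact Submodule.smul_mem _ a hm
  · intro x z ihx ihz
    obtain ⟨Sx, hSx, hx1⟩ := ihx
    obtain ⟨Sz, hSz, hz1⟩ := ihz
    refine ⟨Sx * Sz, fun hmem => (hp.mem_or_mem hmem).elim hSx hSz, ?_⟩
    have : (x + z) * algebraMap D K (Sx * Sz) =
        Sz • (x * algebraMap D K Sx) + Sx • (z * algebraMap D K Sz) := by
      rw [Algebra.smul_def, Algebra.smul_def, map_mul]; ring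
    rw [this]
    exact Submodule.add_mem _ (Submodule.smul_mem _ _ hx1) (Submodule.smul_mem _ _ hz1)

lemma ss_exists_of_one_mem_mul_locAt {M : Ideal D} (hp : M.IsPrime) {E : Submodule D K}
    (h1 : (1 : K) ∈ E * (locAt M : Submodule D K)) :
    ∃ t : D, t ∉ M ∧ algebraMap D K t ∈ E := by
  obtain ⟨S, hS, hSE⟩ := ss_of_mem_mul_locAt hp h1
  exact ⟨S, hS, by rwa [one_mul] at hSE⟩

lemma ss_one_mem_mul_locAt {M : Ideal D} {E : Submodule D K} {t : D} (ht : t ∉ M)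
    (hE : algebraMap D K t ∈ E) : (1 : K) ∈ E * (locAt M : Submodule D K) := by
  have ht0 : t ≠ 0 := fun h0 => ht (h0 ▸ M.zero_mem)
  have hta : algebraMap D K t ≠ 0 := fun h0 => ht0 (ss_algebraMap_injective (by rw [h0, map_zero]))
  have hx : (algebraMap D K t)⁻¹ ∈ (locAt M : Submodule D K) :=
    Submodule.subset_span ⟨t, ht, inv_mul_cancel₀ hta⟩
  have := Submodule.mul_mem_mul hE hx
  rwa [mul_inv_cancel₀ hta] at this

lemma ss_core {W : Submodule D K} (hWb : W ≠ ⊥) (hWfg : W.FG)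
    (hW1 : (1 : K) ∈ s.star W)
    (hWloc : ∀ M : Ideal D, QuasiStarMax (starF s) M → W ≤ (locAt M : Submodule D K))
    {M : Ideal D} (hM : QuasiStarMax (starF s) M) :
    ∃ t : D, t ∉ M ∧ algebraMap D K t ∈ W := by
  classical
  obtain ⟨ϕ, hϕ⟩ := hWfg
  -- the denominator ideal of an element of K
  set Den : K → Ideal D := fun x =>
    Submodule.comap ((LinearMap.mul D K x) ∘ₗ (Algebra.linearMap D K)) (1 : Submodule D K)
    with hDen
  have hDenMem : ∀ (x : K) (c : D), c ∈ Den x ↔ x * algebraMap D K c ∈ (1 : Submodule D K) := by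
    intro x c
    simp [hDen, Submodule.mem_comap, LinearMap.mul_apply']
  have hclaim1 : ∀ x : K, (∀ N : Ideal D, QuasiStarMax (starF s) N → x ∈ (locAt N : Submodule D K))
      → (1 : K) ∈ starF s (Submodule.map (Algebra.linearMap D K) (Den x)) := by
    intro x hx
    have hDb : Den x ≠ ⊥ := by
      obtain ⟨S, hS, h1⟩ := ss_exists_denom (ss_quasiMax_prime s hM) (hx M hM)
      refine (Submodule.ne_bot_iff _).mpr ⟨S, (hDenMem x S).mpr h1, ?_⟩
      exact fun h0 => hS (h0 ▸ M.zero_mem)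
    refine ss_one_mem_of_not_le s hDb ?_
    intro N hN hle
    obtain ⟨S, hS, h1⟩ := ss_exists_denom (ss_quasiMax_prime s hN) (hx N hN)
    exact hS (hle ((hDenMem x S).mpr h1))
  -- build a multiplier module V by induction on a finite set of generators
  have hclaim2 : ∀ ψ : Finset K, (↑ψ : Set K) ⊆ (W : Set K) →
      ∃ V : Submodule D K, V ≤ 1 ∧ (1 : K) ∈ starF s V ∧
        ∀ x ∈ ψ, V * Submodule.span D {x} ≤ 1 := by
    intro ψ
    induction ψ using Finset.induction_on with
    | empty =>
      intro _
      refine ⟨1, le_rfl, ?_, by simp⟩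
      rw [ss_starF_one]
      exact s.le_star 1 (ss_one_ne_bot) (Submodule.one_le.mp le_rfl)
    | insert x ψ' hxψ ih =>
      intro hsub
      have hsub' : (↑ψ' : Set K) ⊆ (W : Set K) :=
        fun y hy => hsub (Finset.mem_coe.mpr (Finset.mem_insert_of_mem hy))
      obtain ⟨V, hV1, hVstar, hV3⟩ := ih hsub'
      have hxW : x ∈ W := hsub (Finset.mem_coe.mpr (Finset.mem_insert_self x ψ'))
      have hxloc : ∀ N : Ideal D, QuasiStarMax (starF s) N → x ∈ (locAt N : Submodule D K) :=
        fun N hN => hWloc N hN hxW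
      have h1x := hclaim1 x hxloc
      have hVb : V ≠ ⊥ := by
        intro hb
        rw [hb, ss_starF_bot] at hVstar
        exact one_ne_zero ((Submodule.mem_bot D).mp hVstar)
      have hDb : Den x ≠ ⊥ := by
        obtain ⟨S, hS, h1⟩ := ss_exists_denom (ss_quasiMax_prime s hM) (hxloc M hM)
        refine (Submodule.ne_bot_iff _).mpr ⟨S, (hDenMem x S).mpr h1, ?_⟩
        exact fun h0 => hS (h0 ▸ M.zero_mem)
      have hmapb : Submodule.map (Algebra.linearMap D K) (Den x) ≠ ⊥ := ss_map_ne_bot hDb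
      have hmaple : Submodule.map (Algebra.linearMap D K) (Den x) ≤ 1 := by
        rintro _ ⟨c, _, rfl⟩
        exact Submodule.algebraMap_mem c
      refine ⟨V * Submodule.map (Algebra.linearMap D K) (Den x), ?_, ?_, ?_⟩
      · have := mul_le_mul' hV1 hmaple
        rwa [one_mul] at this
      · exact ss_one_mem_starF_mul s hVb hmapb hVstar h1x
      · intro y hy
        rcases Finset.mem_insert.mp hy with hyx | hyψ
        · subst hyx
          have hden : Submodule.map (Algebra.linearMap D K) (Den y) * Submodule.span D {y} ≤ 1 := by
            rw [Submodule.mul_le]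
            rintro _ ⟨c, hc, rfl⟩ n hn
            obtain ⟨a, rfl⟩ := Submodule.mem_span_singleton.mp hn
            have hc1 : y * algebraMap D K c ∈ (1 : Submodule D K) := (hDenMem y c).mp hc
            have heq : (Algebra.linearMap D K) c * (a • y) = a • (y * algebraMap D K c) := by
              simp only [Algebra.linearMap_apply]
              rw [mul_smul_comm, mul_comm ((algebraMap D K) c) y]
            rw [heq]
            exact Submodule.smul_mem _ a hc1
          calc V * Submodule.map (Algebra.linearMap D K) (Den y) * Submodule.span D {y}
              = V * (Submodule.map (Algebra.linearMap D K) (Den y) * Submodule.span D {y}) :=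
                mul_assoc _ _ _
            _ ≤ V * 1 := mul_le_mul' le_rfl hden
            _ = V := mul_one V
            _ ≤ 1 := hV1
        · calc V * Submodule.map (Algebra.linearMap D K) (Den x) * Submodule.span D {y}
              = V * Submodule.span D {y} * Submodule.map (Algebra.linearMap D K) (Den x) :=
                mul_right_comm _ _ _
            _ ≤ 1 * 1 := mul_le_mul' (hV3 y hyψ) hmaple
            _ = 1 := one_mul 1
  have hϕW : (↑ϕ : Set K) ⊆ (W : Set K) := by rw [← hϕ]; exact Submodule.subset_span
  obtain ⟨V, hV1, hVstar, hV3⟩ := hclaim2 ϕ hϕW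
  have hVb : V ≠ ⊥ := by
    intro hb
    rw [hb, ss_starF_bot] at hVstar
    exact one_ne_zero ((Submodule.mem_bot D).mp hVstar)
  -- V * W lands inside the image of the ideal comap W
  set A : Ideal D := Submodule.comap (Algebra.linearMap D K) W with hA
  have hVW1 : V * W ≤ 1 := by
    rw [Submodule.mul_le]
    intro v hv w hw
    rw [← hϕ] at hw
    induction hw using Submodule.span_induction with
    | mem y hyϕ => exact hV3 y hyϕ (Submodule.mul_mem_mul hv (Submodule.subset_span rfl))
    | zero => rw [mul_zero]; exact Submodule.zero_mem _
    | add y z _ _ ihy ihz => rw [mul_add]; exact Submodule.add_mem _ ihy ihz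
    | smul a y _ ihy => rw [mul_smul_comm]; exact Submodule.smul_mem _ a ihy
  have hVW2 : V * W ≤ W := by
    rw [Submodule.mul_le]
    intro v hv w hw
    obtain ⟨a, ha⟩ := Submodule.mem_one.mp (hV1 hv)
    rw [← ha, ← Algebra.smul_def]
    exact Submodule.smul_mem _ a hw
  have hVWA : V * W ≤ Submodule.map (Algebra.linearMap D K) A := by
    rw [hA, Submodule.map_comap_eq (Algebra.linearMap D K) W, ← Submodule.one_eq_range]
    exact le_inf hVW1 hVW2
  obtain ⟨G, hGV, hGb, hGfg, hG1⟩ := ss_mem_starF s hVb hVstar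
  have h1WG : (1 : K) ∈ s.star (W * G) := ss_one_mem_star_mul s hWb hGb hW1 hG1
  have hWGle : W * G ≤ Submodule.map (Algebra.linearMap D K) A := by
    calc W * G ≤ W * V := mul_le_mul' le_rfl hGV
      _ = V * W := mul_comm W V
      _ ≤ _ := hVWA
  have h1A : (1 : K) ∈ starF s (Submodule.map (Algebra.linearMap D K) A) :=
    ss_star_le_starF s hWGle (ss_mul_ne_bot hWb hGb) (hϕ ▸ (Submodule.FG.mul ⟨ϕ, rfl⟩ hGfg)) h1WG
  have hnle : ¬ A ≤ M := ss_not_le_of_one_mem s hM h1A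
  obtain ⟨t, htA, htM⟩ := SetLike.not_le_iff_exists.mp hnle
  exact ⟨t, htM, by simpa [Algebra.linearMap_apply] using Submodule.mem_comap.mp htA⟩

end Aux2

theorem stmt17 (s : SemistarOperation D K) (h : s.star 1 = starTilde s 1)
    (I : Submodule D K) (hI : I ≠ ⊥) :
    starF s (I * (starF s 1 / I)) = starF s 1 ↔
    starTilde s (I * (starTilde s 1 / I)) = starTilde s 1 := by
  classical
  by_cases hex : ∃ M : Ideal D, QuasiStarMax (starF s) M
  · obtain ⟨M₀, hM₀⟩ := hex
    have e2 : starTilde s (1 : Submodule D K) =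
        ⨅ (Q : Ideal D) (_ : QuasiStarMax (starF s) Q), (locAt Q : Submodule D K) := by
      unfold starTilde
      exact iInf_congr fun Q => iInf_congr fun _ => one_mul _
    rw [ss_starF_one s, ← h]
    set T := s.star (1 : Submodule D K) with hT
    set J := I * (T / I) with hJdef
    have hT2 : T = ⨅ (Q : Ideal D) (_ : QuasiStarMax (starF s) Q), (locAt Q : Submodule D K) :=
      h.trans e2
    have h1T : (1 : K) ∈ T := s.le_star 1 (ss_one_ne_bot) (Submodule.one_le.mp le_rfl)
    have hTb : T ≠ ⊥ := by
      intro hb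
      rw [hb] at h1T
      exact one_ne_zero ((Submodule.mem_bot D).mp h1T)
    have hJT : J ≤ T := by
      rw [hJdef, Submodule.mul_le]
      intro x hx y hy
      rw [mul_comm]
      exact Submodule.mem_div_iff_forall_mul_mem.mp hy x hx
    have hTloc : ∀ M : Ideal D, QuasiStarMax (starF s) M → T ≤ (locAt M : Submodule D K) := by
      intro M hM
      rw [hT2]
      exact iInf₂_le M hM
    have hprime : ∀ M : Ideal D, QuasiStarMax (starF s) M → M.IsPrime :=
      fun M hM => ss_quasiMax_prime s hM
    have hTilde_le : ∀ (E : Submodule D K) (M : Ideal D), QuasiStarMax (starF s) M →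
        starTilde s E ≤ E * locAt M := by
      intro E M hM
      unfold starTilde
      exact iInf₂_le M hM
    by_cases hJb : J = ⊥
    · have hL : starF s J = ⊥ := by rw [hJb, ss_starF_bot]
      have hR : starTilde s J ≤ ⊥ := by
        refine (hTilde_le J M₀ hM₀).trans ?_
        rw [hJb, Submodule.bot_mul]
      constructor
      · intro hc
        rw [hL] at hc
        exact absurd hc.symm hTb
      · intro hc
        rw [hc] at hR
        exact absurd (le_bot_iff.mp hR) hTb
    · constructor
      · intro hf
        have h1 : (1 : K) ∈ starF s J := by rw [hf]; exact h1T
        obtain ⟨W, hWJ, hWb, hWfg, hW1⟩ := ss_mem_starF s hJb h1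
        have key : ∀ M : Ideal D, QuasiStarMax (starF s) M → (1 : K) ∈ J * locAt M := by
          intro M hM
          obtain ⟨t, htM, htW⟩ := ss_core s hWb hWfg hW1
            (fun N hN => (hWJ.trans hJT).trans (hTloc N hN)) hM
          exact ss_one_mem_mul_locAt htM (hWJ htW)
        apply le_antisymm
        · rw [hT2]
          refine le_iInf fun M => le_iInf fun hM => ?_
          refine (hTilde_le J M hM).trans ?_
          calc J * locAt M ≤ locAt M * locAt M :=
              mul_le_mul' (hJT.trans (hTloc M hM)) le_rfl
            _ ≤ locAt M := ss_locAt_mul_self (hprime M hM)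
        · show T ≤ starTilde s J
          unfold starTilde
          refine le_iInf fun M => le_iInf fun hM => ?_
          have hlocle : (locAt M : Submodule D K) ≤ J * locAt M := by
            have h2 : (locAt M : Submodule D K) ≤ (J * locAt M) * locAt M := by
              have h3 := mul_le_mul' (Submodule.one_le.mpr (key M hM))
                (le_rfl : (locAt M : Submodule D K) ≤ locAt M)
              rwa [one_mul] at h3
            refine h2.trans ?_
            rw [mul_assoc]
            exact mul_le_mul' le_rfl (ss_locAt_mul_self (hprime M hM))
          exact (hTloc M hM).trans hlocle
      · intro ht
        have h1t : (1 : K) ∈ starTilde s J := by rw [ht]; exact h1T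
        have hget : ∀ M : Ideal D, QuasiStarMax (starF s) M →
            ∃ t : D, t ∉ M ∧ algebraMap D K t ∈ J := by
          intro M hM
          exact ss_exists_of_one_mem_mul_locAt (hprime M hM) ((hTilde_le J M hM) h1t)
        have hnle : ∀ M : Ideal D, QuasiStarMax (starF s) M →
            ¬ (Submodule.comap (Algebra.linearMap D K) J ≤ M) := by
          intro M hM hle
          obtain ⟨t, htM, htJ⟩ := hget M hM
          exact htM (hle (Submodule.mem_comap.mpr
            (by simpa [Algebra.linearMap_apply] using htJ)))
        have hAb : Submodule.comap (Algebra.linearMap D K) J ≠ ⊥ := by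
          obtain ⟨t, htM, htJ⟩ := hget M₀ hM₀
          refine (Submodule.ne_bot_iff _).mpr ⟨t, Submodule.mem_comap.mpr
            (by simpa [Algebra.linearMap_apply] using htJ), ?_⟩
          intro h0
          rw [h0] at htM
          exact htM M₀.zero_mem
        have h1map := ss_one_mem_of_not_le s hAb hnle
        have h1f : (1 : K) ∈ starF s J :=
          ss_starF_mono s (Submodule.map_comap_le (Algebra.linearMap D K) J) h1map
        have hidem : s.star T = T := by
          rw [hT]
          exact s.star_idem 1 (ss_one_ne_bot)
        apply le_antisymm
        · refine (ss_starF_le_star s hJb).trans ?_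
          exact (s.star_mono J T hJb hTb hJT).trans (le_of_eq hidem)
        · obtain ⟨F, hFJ, hFb, hFfg, hF1⟩ := ss_mem_starF s hJb h1f
          have h2 : T ≤ s.star (s.star F) := by
            rw [hT]
            exact s.star_mono 1 (s.star F) (ss_one_ne_bot) (ss_star_ne_bot s hFb)
              (Submodule.one_le.mpr hF1)
          rw [s.star_idem F hFb] at h2
          exact h2.trans (ss_star_le_starF s hFJ hFb hFfg)
  · have hTop : ∀ E : Submodule D K, starTilde s E = ⊤ := by
      intro E
      exact le_antisymm le_top (le_iInf fun Q => le_iInf fun hQ => absurd ⟨Q, hQ⟩ hex)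
    have hs1 : s.star (1 : Submodule D K) = ⊤ := by rw [h, hTop]
    have hdiv : (⊤ : Submodule D K) / I = ⊤ := by
      refine le_antisymm le_top ?_
      intro x _
      exact Submodule.mem_div_iff_forall_mul_mem.mpr fun y _ => Submodule.mem_top
    have hItop : I * (⊤ : Submodule D K) = ⊤ := by
      obtain ⟨x, hxI, hx0⟩ := (Submodule.ne_bot_iff I).mp hI
      refine le_antisymm le_top ?_
      intro k _
      have h3 : x * (x⁻¹ * k) ∈ I * (⊤ : Submodule D K) :=
        Submodule.mul_mem_mul hxI Submodule.mem_top
      rwa [← mul_assoc, mul_inv_cancel₀ hx0, one_mul] at h3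
    have hstarFtop : starF s (⊤ : Submodule D K) = ⊤ := by
      refine le_antisymm le_top ?_
      have h4 : s.star 1 ≤ starF s (⊤ : Submodule D K) :=
        ss_star_le_starF s le_top (ss_one_ne_bot) (ss_fg_one)
      rw [hs1] at h4
      exact h4
    have hL : starF s (I * (starF s (1 : Submodule D K) / I)) = starF s 1 := by
      rw [ss_starF_one s, hs1, hdiv, hItop, hstarFtop]
    have hR : starTilde s (I * (starTilde s (1 : Submodule D K) / I)) = starTilde s 1 := by
      rw [hTop, hTop]
    exact iff_of_true hL hR
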